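/- Let a, b1, b2 > 0 and let x, y ∈ [0,1) satisfy |x−y| < 1−x and |x−y| < 1−y. Then g_{a,b1,b2}(x,y) = g_{a,b2,b1}(y,x). -/

import Mathlib

open Real MeasureTheory

/-- Rising factorial (Pochhammer symbol) `(a)_k`. -/
noncomputable def poch (a : ℝ) (k : ℕ) : ℝ := (ascPochhammer ℝ k).eval a

/-- Euler beta function `B(p,q) = Γ(p)Γ(q)/Γ(p+q)`. -/
noncomputable def eulerBeta (p q : ℝ) : ℝ := Real.Gamma p * Real.Gamma q / Real.Gamma (p + q)

/-- Digamma function `ψ(x) = Γ'(x)/Γ(x)`. -/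
noncomputable def psi (x : ℝ) : ℝ := deriv Real.Gamma x / Real.Gamma x

/-- General term of the double series for `B(a,b₁+b₂)·F₁(a;b₁,b₂;a+b₁+b₂;x,y)`. -/
noncomputable def F1term (a b1 b2 x y : ℝ) (p : ℕ × ℕ) : ℝ :=
  poch a (p.1 + p.2) * poch b1 p.1 * poch b2 p.2 * x ^ p.1 * y ^ p.2 /
    (poch (a + b1 + b2) (p.1 + p.2) * (Nat.factorial p.1 : ℝ) * (Nat.factorial p.2 : ℝ))

/-- `f_{a,b₁,b₂}(x,y) = B(a,b₁+b₂)·F₁(a;b₁,b₂;a+b₁+b₂;x,y)` as a double series. -/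
noncomputable def f (a b1 b2 x y : ℝ) : ℝ :=
  eulerBeta a (b1 + b2) * ∑' p : ℕ × ℕ, F1term a b1 b2 x y p

/-- The approximation `g_{a,b₁,b₂}(x,y)`. -/
noncomputable def g (a b1 b2 x y : ℝ) : ℝ :=
  Real.log (1 / (1 - x)) + 2 * psi 1 - psi a - psi (b1 + b2) +
    ∑' k : ℕ, poch b2 (k + 1) / ((k + 1 : ℝ) * poch (b1 + b2) (k + 1)) *
      ((y - x) / (1 - x)) ^ (k + 1)

lemma poch_zero (b : ℝ) : poch b 0 = 1 := by simp [poch]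

lemma poch_succ (b : ℝ) (k : ℕ) : poch b (k + 1) = poch b k * (b + k) := by
  simp [poch, ascPochhammer_succ_eval]

lemma poch_succ_left (b : ℝ) (k : ℕ) : poch b (k + 1) = b * poch (b + 1) k := by
  simp [poch, ascPochhammer_succ_left, Polynomial.eval_mul, Polynomial.eval_comp]

lemma poch_pos {c : ℝ} (hc : 0 < c) (k : ℕ) : 0 < poch c k :=
  ascPochhammer_pos k c hc

lemma poch_mono {b c : ℝ} (hb : 0 < b) (hbc : b ≤ c) (k : ℕ) : poch b k ≤ poch c k := by
  induction k with
  | zero => simp [poch_zero]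
  | succ k ih =>
      rw [poch_succ, poch_succ]
      have h1 : (0:ℝ) < b + k := by positivity
      have := poch_pos hb k
      nlinarith [poch_pos hb k]

lemma chu (N : ℕ) : ∀ (b c : ℝ), 0 < c →
    ∑ m ∈ Finset.range (N + 1), (-1 : ℝ) ^ m * (N.choose m) * (poch b m / poch c m)
      = poch (c - b) N / poch c N := by
  induction N with
  | zero => intro b c hc; simp [poch_zero]
  | succ N ih =>
    intro b c hc
    have hc1 : (0:ℝ) < c + 1 := by linarith
    have hcN : poch c N ≠ 0 := (poch_pos hc N).ne'
    have hc1N : poch (c+1) N ≠ 0 := (poch_pos hc1 N).ne'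
    have hcN1 : poch c (N+1) ≠ 0 := (poch_pos hc (N+1)).ne'
    rw [Finset.sum_range_succ']
    have hterm : ∀ k ∈ Finset.range (N + 1),
        (-1 : ℝ) ^ (k+1) * ((N+1).choose (k+1)) * (poch b (k+1) / poch c (k+1))
        = (-1 : ℝ) ^ (k+1) * (N.choose (k+1)) * (poch b (k+1) / poch c (k+1))
          + (-(b/c)) * ((-1 : ℝ) ^ k * (N.choose k) * (poch (b+1) k / poch (c+1) k)) := by
      intro k _
      have h1 : ((N+1).choose (k+1) : ℝ) = (N.choose k : ℝ) + (N.choose (k+1) : ℝ) := by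
        rw [Nat.choose_succ_succ]; push_cast; ring
      have h2 : poch b (k+1) = b * poch (b+1) k := poch_succ_left b k
      have h3 : poch c (k+1) = c * poch (c+1) k := poch_succ_left c k
      have h4 : poch (c+1) k ≠ 0 := (poch_pos hc1 k).ne'
      rw [h1, h2, h3]
      field_simp
      ring
    rw [Finset.sum_congr rfl hterm, Finset.sum_add_distrib, ← Finset.mul_sum, ih (b+1) (c+1) hc1]
    have hfirst : ∑ k ∈ Finset.range (N + 1),
        (-1 : ℝ) ^ (k+1) * (N.choose (k+1)) * (poch b (k+1) / poch c (k+1))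
        + (-1:ℝ)^0 * (N.choose 0) * (poch b 0 / poch c 0)
        = poch (c - b) N / poch c N := by
      rw [← Finset.sum_range_succ' (fun m => (-1 : ℝ) ^ m * (N.choose m) * (poch b m / poch c m)) (N+1)]
      rw [Finset.sum_range_succ]
      simp [Nat.choose_succ_self]
      exact ih b c hc
    have e0 : (-1:ℝ)^0 * (N.choose 0) * (poch b 0 / poch c 0) = 1 := by simp [poch_zero]
    have he : c + 1 - (b + 1) = c - b := by ring
    rw [he]
    have key : poch (c - b) N / poch c N - (b/c) * (poch (c - b) N / poch (c+1) N)
        = poch (c - b) (N+1) / poch c (N+1) := by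
      have e1 : poch c (N+1) = poch c N * (c + N) := poch_succ c N
      have e2 : poch c (N+1) = c * poch (c+1) N := poch_succ_left c N
      have e3 : poch (c-b) (N+1) = poch (c-b) N * (c - b + N) := poch_succ (c-b) N
      have e4 : c * poch (c+1) N = poch c N * (c + (N:ℝ)) := e2.symm.trans e1
      rw [e3]
      field_simp
      rw [e1]
      linear_combination (poch (c-b) N * poch c N * b) * e4
    simp only [pow_zero, Nat.choose_zero_right, Nat.cast_one, one_mul, poch_zero, div_one] at hfirst ⊢
    linarith [key, hfirst]

lemma coeff (b1 b2 : ℝ) (hb1 : 0 < b1) (hb2 : 0 < b2) (n : ℕ) :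
    ∑ k ∈ Finset.range (n + 1),
      (-1 : ℝ) ^ (k + 1) * (n.choose k) * (poch b1 (k + 1) / (((k:ℝ) + 1) * poch (b1 + b2) (k + 1)))
    = (poch b2 (n + 1) / poch (b1 + b2) (n + 1) - 1) / ((n:ℝ) + 1) := by
  have hc : (0:ℝ) < b1 + b2 := by linarith
  have hn1 : ((n:ℝ) + 1) ≠ 0 := by positivity
  have hterm : ∀ k ∈ Finset.range (n + 1),
      (-1 : ℝ) ^ (k + 1) * (n.choose k) * (poch b1 (k + 1) / (((k:ℝ) + 1) * poch (b1 + b2) (k + 1)))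
      = (1 / ((n:ℝ) + 1)) * ((-1 : ℝ) ^ (k+1) * ((n+1).choose (k+1)) *
          (poch b1 (k+1) / poch (b1+b2) (k+1))) := by
    intro k _
    have h := Nat.add_one_mul_choose_eq n k
    have h' : ((n:ℝ) + 1) * (n.choose k : ℝ) = ((n+1).choose (k+1) : ℝ) * ((k:ℝ) + 1) := by
      exact_mod_cast congrArg (Nat.cast : ℕ → ℝ) h
    have hk1 : ((k:ℝ) + 1) ≠ 0 := by positivity
    have hp : poch (b1+b2) (k+1) ≠ 0 := (poch_pos hc (k+1)).ne'
    field_simp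
    linear_combination (poch b1 (k+1)) * h'
  rw [Finset.sum_congr rfl hterm, ← Finset.mul_sum]
  have hsum : ∑ k ∈ Finset.range (n + 1),
      ((-1 : ℝ) ^ (k+1) * ((n+1).choose (k+1)) * (poch b1 (k+1) / poch (b1+b2) (k+1)))
      = poch b2 (n+1) / poch (b1+b2) (n+1) - 1 := by
    have h := chu (n+1) b1 (b1+b2) hc
    rw [Finset.sum_range_succ'] at h
    simp only [pow_zero, Nat.choose_zero_right, Nat.cast_one, one_mul, poch_zero, div_one] at h
    have he : b1 + b2 - b1 = b2 := by ring
    rw [he] at h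
    linarith
  rw [hsum]
  ring


set_option maxHeartbeats 2000000 in
lemma g_symm_aux (a b1 b2 x y : ℝ) (hb1 : 0 < b1) (hb2 : 0 < b2)
    (hx1 : x < 1) (hy1 : y < 1) (hxy : x ≤ y) (h2 : |x - y| < 1 - y) :
    g a b1 b2 x y = g a b2 b1 y x := by
  have hx : (0:ℝ) < 1 - x := by linarith
  have hy : (0:ℝ) < 1 - y := by linarith
  set z : ℝ := (y - x) / (1 - x) with hzdef
  have hz0 : 0 ≤ z := div_nonneg (by linarith) hx.le
  have h2' : y - x < 1 - y := by
    rwa [abs_sub_comm, abs_of_nonneg (by linarith : (0:ℝ) ≤ y - x)] at h2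
  have hz2 : z < 1/2 := by
    rw [hzdef, div_lt_iff₀ hx]; linarith
  have hz1 : z < 1 := by linarith
  have habsz : |z| < 1 := by rw [abs_of_nonneg hz0]; linarith
  have h1z : (0:ℝ) < 1 - z := by linarith
  have h1zx : 1 - z = (1 - y) / (1 - x) := by
    rw [hzdef]; field_simp; ring
  have hw : (x - y) / (1 - y) = -z / (1 - z) := by
    rw [h1zx, hzdef]; field_simp; ring
  set w : ℝ := -z / (1 - z) with hwdef
  set c : ℝ := b1 + b2 with hcdef
  have hc : (0:ℝ) < c := by rw [hcdef]; linarith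
  set r : ℝ := z / (1 - z) with hrdef
  have hr0 : 0 ≤ r := div_nonneg hz0 h1z.le
  have hr1 : r < 1 := by
    rw [hrdef, div_lt_one h1z]; linarith
  set A1 : ℕ → ℝ := fun k => poch b1 (k + 1) / (((k:ℝ) + 1) * poch c (k + 1)) with hA1def
  set A2 : ℕ → ℝ := fun k => poch b2 (k + 1) / (((k:ℝ) + 1) * poch c (k + 1)) with hA2def
  have hpochc : ∀ k : ℕ, (0:ℝ) < ((k:ℝ) + 1) * poch c (k + 1) := fun k =>
    mul_pos (by positivity) (poch_pos hc (k+1))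
  have hA1nonneg : ∀ k, 0 ≤ A1 k := fun k =>
    div_nonneg (poch_pos hb1 (k+1)).le (hpochc k).le
  have hA1le : ∀ k, A1 k ≤ 1 := by
    intro k
    rw [hA1def, div_le_one (hpochc k)]
    have h1 : poch b1 (k+1) ≤ poch c (k+1) := poch_mono hb1 (by rw [hcdef]; linarith) (k+1)
    nlinarith [poch_pos hc (k+1), (Nat.cast_nonneg k : (0:ℝ) ≤ k)]
  have hA2nonneg : ∀ k, 0 ≤ A2 k := fun k =>
    div_nonneg (poch_pos hb2 (k+1)).le (hpochc k).le
  have hA2le : ∀ k, A2 k ≤ 1 := by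
    intro k
    rw [hA2def, div_le_one (hpochc k)]
    have h1 : poch b2 (k+1) ≤ poch c (k+1) := poch_mono hb2 (by rw [hcdef]; linarith) (k+1)
    nlinarith [poch_pos hc (k+1), (Nat.cast_nonneg k : (0:ℝ) ≤ k)]
  -- the double series
  set F : ℕ × ℕ → ℝ :=
    fun p => A1 p.1 * (-z) ^ (p.1 + 1) * (((p.2 + p.1).choose p.1 : ℝ) * z ^ p.2) with hFdef
  have hbin : ∀ k : ℕ, HasSum (fun j => F (k, j)) (A1 k * w ^ (k + 1)) := by
    intro k
    have h := (hasSum_choose_mul_geometric_of_norm_lt_one k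
      (by rwa [Real.norm_eq_abs] : ‖z‖ < 1)).mul_left (A1 k * (-z) ^ (k + 1))
    have hval : A1 k * (-z) ^ (k + 1) * (1 / (1 - z) ^ (k + 1)) = A1 k * w ^ (k + 1) := by
      rw [hwdef]; rw [div_pow]; ring
    rw [hval] at h
    exact h
  have habs : ∀ p : ℕ × ℕ, |F p| = A1 p.1 * z ^ (p.1 + 1) * (((p.2 + p.1).choose p.1 : ℝ) * z ^ p.2) := by
    intro ⟨k, j⟩
    rw [hFdef]
    simp only []
    rw [abs_mul, abs_mul, abs_of_nonneg (hA1nonneg k), abs_pow, abs_neg,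
      abs_of_nonneg hz0, abs_of_nonneg (by positivity)]
  have habs_fiber : ∀ k : ℕ, HasSum (fun j => |F (k, j)|) (A1 k * r ^ (k + 1)) := by
    intro k
    have h := (hasSum_choose_mul_geometric_of_norm_lt_one k
      (by rwa [Real.norm_eq_abs] : ‖z‖ < 1)).mul_left (A1 k * z ^ (k + 1))
    have hrpow : r ^ (k + 1) = z ^ (k + 1) * (1 / (1 - z) ^ (k + 1)) := by
      rw [hrdef, div_pow, div_eq_mul_one_div]
    have hval : A1 k * z ^ (k + 1) * (1 / (1 - z) ^ (k + 1)) = A1 k * r ^ (k + 1) := by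
      rw [hrpow, mul_assoc]
    rw [hval] at h
    have hf : (fun j => |F (k, j)|) = fun i => A1 k * z ^ (k + 1) * (((i + k).choose k : ℝ) * z ^ i) := by
      funext j
      rw [habs (k, j)]
    rw [hf]; exact h
  have hFabs : Summable (fun p : ℕ × ℕ => |F p|) := by
    apply (summable_prod_of_nonneg (fun p => abs_nonneg _)).2
    refine ⟨fun k => (habs_fiber k).summable, ?_⟩
    apply Summable.of_nonneg_of_le (fun k => tsum_nonneg (fun j => abs_nonneg _))
      (fun k => ?_) (summable_geometric_of_lt_one hr0 hr1)
    rw [(habs_fiber k).tsum_eq]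
    calc A1 k * r ^ (k + 1) ≤ 1 * r ^ (k + 1) := by
          apply mul_le_mul_of_nonneg_right (hA1le k) (by positivity)
      _ = r ^ k * r := by ring
      _ ≤ r ^ k * 1 := by apply mul_le_mul_of_nonneg_left hr1.le (by positivity)
      _ = r ^ k := by ring
  have hF : Summable F := hFabs.of_abs
  -- sum computed fiberwise
  have hS1 : ∑' p : ℕ × ℕ, F p = ∑' k : ℕ, A1 k * w ^ (k + 1) := by
    rw [Summable.tsum_prod hF]
    exact tsum_congr fun k => (hbin k).tsum_eq
  -- sum computed diagonally
  have hdiagsum : ∑' p : ℕ × ℕ, F p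
      = ∑' n : ℕ, ∑ kl ∈ Finset.HasAntidiagonal.antidiagonal n, F kl := by
    rw [← Finset.HasAntidiagonal.sigmaAntidiagonalEquivProd.tsum_eq (_ : ℕ × ℕ → ℝ)]
    have hsig := Summable.tsum_sigma'
      (f := fun q : (n : ℕ) × {p // p ∈ Finset.HasAntidiagonal.antidiagonal n} =>
        F (Finset.HasAntidiagonal.sigmaAntidiagonalEquivProd q))
      (fun n => (hasSum_fintype _).summable)
      (Finset.HasAntidiagonal.sigmaAntidiagonalEquivProd.summable_iff.2 hF)
    rw [hsig]
    refine tsum_congr fun n => ?_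
    rw [tsum_fintype]
    exact Finset.sum_coe_sort _ _
  have hdiag : ∀ n : ℕ, ∑ kl ∈ Finset.HasAntidiagonal.antidiagonal n, F kl
      = A2 n * z ^ (n + 1) - z ^ (n + 1) / ((n:ℝ) + 1) := by
    intro n
    rw [Finset.Nat.sum_antidiagonal_eq_sum_range_succ_mk]
    have hterm : ∀ k ∈ Finset.range (n + 1), F (k, n - k)
        = ((-1 : ℝ) ^ (k + 1) * (n.choose k) * A1 k) * z ^ (n + 1) := by
      intro k hk
      rw [Finset.mem_range] at hk
      have hk' : k ≤ n := Nat.lt_succ_iff.mp hk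
      simp only [hFdef]
      rw [Nat.sub_add_cancel hk']
      rw [neg_pow]
      rw [show n + 1 = k + 1 + (n - k) from by omega, pow_add]
      ring
    rw [Finset.sum_congr rfl hterm, ← Finset.sum_mul]
    rw [coeff b1 b2 hb1 hb2 n]
    have hp : poch c (n+1) ≠ 0 := (poch_pos hc (n+1)).ne'
    have hn1 : ((n:ℝ) + 1) ≠ 0 := by positivity
    rw [hA2def, ← hcdef]
    field_simp
  have hA2sum : Summable (fun n => A2 n * z ^ (n + 1)) := by
    apply Summable.of_nonneg_of_le
      (fun n => mul_nonneg (hA2nonneg n) (by positivity)) (fun n => ?_)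
      (summable_geometric_of_lt_one hz0 hz1)
    calc A2 n * z ^ (n + 1) ≤ 1 * z ^ (n + 1) :=
          mul_le_mul_of_nonneg_right (hA2le n) (by positivity)
      _ = z ^ n * z := by ring
      _ ≤ z ^ n * 1 := mul_le_mul_of_nonneg_left hz1.le (by positivity)
      _ = z ^ n := by ring
  have hlog : HasSum (fun n : ℕ => z ^ (n + 1) / ((n:ℝ) + 1)) (-Real.log (1 - z)) := by
    have := hasSum_pow_div_log_of_abs_lt_one habsz
    convert this using 2 with n
  have hkey : ∑' k : ℕ, A1 k * w ^ (k + 1)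
      = (∑' n : ℕ, A2 n * z ^ (n + 1)) + Real.log (1 - z) := by
    rw [← hS1, hdiagsum]
    have h := (hA2sum.hasSum.sub hlog).tsum_eq
    calc ∑' n : ℕ, ∑ kl ∈ Finset.HasAntidiagonal.antidiagonal n, F kl
        = ∑' n : ℕ, (A2 n * z ^ (n + 1) - z ^ (n + 1) / ((n:ℝ) + 1)) := tsum_congr hdiag
      _ = (∑' n : ℕ, A2 n * z ^ (n + 1)) - (-Real.log (1 - z)) := h
      _ = (∑' n : ℕ, A2 n * z ^ (n + 1)) + Real.log (1 - z) := by ring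
  -- log identity
  have hlogid : Real.log (1 / (1 - x)) = Real.log (1 / (1 - y)) + Real.log (1 - z) := by
    rw [h1zx, one_div, one_div, Real.log_inv, Real.log_inv, Real.log_div hy.ne' hx.ne']
    ring
  -- assemble
  rw [g, g]
  rw [show b2 + b1 = b1 + b2 from add_comm b2 b1]
  simp only [hw]
  rw [show ∑' (k : ℕ), poch b2 (k + 1) / ((↑k + 1) * poch (b1 + b2) (k + 1)) *
        ((y - x) / (1 - x)) ^ (k + 1) = ∑' n : ℕ, A2 n * z ^ (n + 1) from
    tsum_congr fun k => by rw [hA2def, hcdef, hzdef]]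
  rw [show ∑' (k : ℕ), poch b1 (k + 1) / ((↑k + 1) * poch (b1 + b2) (k + 1)) *
        (-z / (1 - z)) ^ (k + 1) = ∑' k : ℕ, A1 k * w ^ (k + 1) from
    tsum_congr fun k => by rw [hA1def, hcdef, hwdef]]
  rw [hkey, hlogid]
  ring

/-- permutation symmetry of `g`. -/
theorem g_symm (a b1 b2 x y : ℝ) (ha : 0 < a) (hb1 : 0 < b1) (hb2 : 0 < b2)
    (hx0 : 0 ≤ x) (hx1 : x < 1) (hy0 : 0 ≤ y) (hy1 : y < 1)
    (h1 : |x - y| < 1 - x) (h2 : |x - y| < 1 - y) :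
    g a b1 b2 x y = g a b2 b1 y x := by
  rcases le_total x y with h | h
  · exact g_symm_aux a b1 b2 x y hb1 hb2 hx1 hy1 h h2
  · exact (g_symm_aux a b2 b1 y x hb2 hb1 hy1 hx1 h (by rwa [abs_sub_comm] at h1)).symm
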